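/- Let A be a 2×2 integer matrix with det A = ±1 all of whose eigenvalues have modulus 1. Then the flow (𝕋², T) with T(x) = Ax is minimally mean attractable (MMA) and minimally mean-L-stable (MMLS). -/

import Mathlib

open Filter Finset Topology
open scoped Classical

/-- A sequence of complex numbers is *oscillating* if its twisted Cesàro means tend to zero
for every frequency `t ∈ [0,1)`. -/
def Oscillating (c : ℕ → ℂ) : Prop :=
  ∀ t : ℝ, 0 ≤ t → t < 1 →
    Filter.Tendsto
      (fun N : ℕ => (N : ℂ)⁻¹ * ∑ n ∈ Finset.Icc 1 N,
        c n * Complex.exp (-(2 * Real.pi * Complex.I * n * t)))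
      Filter.atTop (nhds 0)

/-- The growth condition: `∑_{n=1}^N |c n|^λ = O(N)` for some `λ > 1`. -/
def GrowthCondition (c : ℕ → ℂ) : Prop :=
  ∃ lam : ℝ, 1 < lam ∧ ∃ C : ℝ, ∀ N : ℕ,
    ∑ n ∈ Finset.Icc 1 N, ‖c n‖ ^ lam ≤ C * N

/-- Upper density of a set of natural numbers. -/
noncomputable def upperDensity (E : Set ℕ) : ℝ :=
  Filter.limsup (fun N : ℕ => (((Finset.Icc 1 N).filter (fun n => n ∈ E)).card : ℝ) / N)
    Filter.atTop

/-- A flow is mean-L-stable (MLS). -/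
def IsMLS {X : Type*} [PseudoMetricSpace X] (T : X → X) : Prop :=
  ∀ ε : ℝ, 0 < ε → ∃ δ : ℝ, 0 < δ ∧ ∀ x y : X, dist x y < δ →
    upperDensity {n : ℕ | ε ≤ dist (T^[n] x) (T^[n] y)} < ε

/-- The restriction of a flow to a subset `K` is mean-L-stable. -/
def IsMLSOn {X : Type*} [PseudoMetricSpace X] (T : X → X) (K : Set X) : Prop :=
  ∀ ε : ℝ, 0 < ε → ∃ δ : ℝ, 0 < δ ∧ ∀ x ∈ K, ∀ y ∈ K, dist x y < δ →
    upperDensity {n : ℕ | ε ≤ dist (T^[n] x) (T^[n] y)} < ε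

/-- A minimal subset of a flow: nonempty, closed, invariant, and every forward orbit is dense. -/
def MinimalSubset {X : Type*} [TopologicalSpace X] (T : X → X) (K : Set X) : Prop :=
  K.Nonempty ∧ IsClosed K ∧ Set.MapsTo T K K ∧
    ∀ x ∈ K, K ⊆ closure (Set.range fun n : ℕ => T^[n] x)

/-- A flow is minimally mean-L-stable (MMLS) if its restriction to every minimal subset is MLS. -/
def IsMMLS {X : Type*} [PseudoMetricSpace X] (T : X → X) : Prop :=
  ∀ K : Set X, MinimalSubset T K → IsMLSOn T K

/-- `x` is mean attracted to `K`. -/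
def MeanAttracted {X : Type*} [PseudoMetricSpace X] (T : X → X) (x : X) (K : Set X) : Prop :=
  ∀ ε : ℝ, 0 < ε → ∃ z ∈ K,
    Filter.limsup
      (fun N : ℕ => (N : ℝ)⁻¹ * ∑ n ∈ Finset.Icc 1 N, dist (T^[n] x) (T^[n] z))
      Filter.atTop < ε

/-- A flow is minimally mean attractable (MMA). -/
def IsMMA {X : Type*} [PseudoMetricSpace X] (T : X → X) : Prop :=
  ∀ x : X, ∃ K : Set X, MinimalSubset T K ∧ MeanAttracted T x K

/-- A sequence is linearly disjoint from a flow. -/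
def LinearlyDisjoint {X : Type*} [TopologicalSpace X] (c : ℕ → ℂ) (T : X → X) : Prop :=
  ∀ f : C(X, ℂ), ∀ x : X,
    Filter.Tendsto
      (fun N : ℕ => (N : ℂ)⁻¹ * ∑ n ∈ Finset.Icc 1 N, c n * f (T^[n] x))
      Filter.atTop (nhds 0)

/-- An equicontinuous flow. -/
def EquicontinuousFlow {X : Type*} [PseudoMetricSpace X] (T : X → X) : Prop :=
  ∀ ε : ℝ, 0 < ε → ∃ δ : ℝ, 0 < δ ∧ ∀ x y : X, dist x y < δ →
    ∀ n : ℕ, dist (T^[n] x) (T^[n] y) < ε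



/-- The integer lattice `ℤ²` inside the Euclidean plane, generated by the standard basis. -/
noncomputable def torusLattice : AddSubgroup (EuclideanSpace ℝ (Fin 2)) :=
  AddSubgroup.closure (Set.range fun i : Fin 2 => EuclideanSpace.single i (1 : ℝ))

/-- The 2-torus `𝕋² = ℝ²/ℤ²`, equipped with the quotient (semi)norm
`‖x‖_{𝕋²} = inf_{n ∈ ℤ²} ‖x - n‖_{ℝ²}`. -/
abbrev Torus2 : Type := EuclideanSpace ℝ (Fin 2) ⧸ torusLattice

/-- The linear action of a `2×2` integer matrix on the Euclidean plane. -/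
noncomputable def matAction (A : Matrix (Fin 2) (Fin 2) ℤ) (v : EuclideanSpace ℝ (Fin 2)) :
    EuclideanSpace ℝ (Fin 2) :=
  (WithLp.equiv 2 (Fin 2 → ℝ)).symm
    ((A.map (Int.cast : ℤ → ℝ)).mulVec (WithLp.equiv 2 (Fin 2 → ℝ) v))

/-- `A` is diagonalizable over `ℂ`. -/
def DiagonalizableOverC (A : Matrix (Fin 2) (Fin 2) ℤ) : Prop :=
  ∃ P : Matrix (Fin 2) (Fin 2) ℂ, IsUnit P.det ∧
    (P⁻¹ * A.map (Int.cast : ℤ → ℂ) * P).IsDiag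

/-- All (complex) eigenvalues of `A` have modulus `1`. -/
def EigenvaluesModulusOne (A : Matrix (Fin 2) (Fin 2) ℤ) : Prop :=
  ∀ μ ∈ (A.map (Int.cast : ℤ → ℂ)).charpoly.roots, ‖μ‖ = 1

namespace TorusPf

open Matrix

abbrev E2 : Type := EuclideanSpace ℝ (Fin 2)
abbrev Mat2 : Type := Matrix (Fin 2) (Fin 2) ℤ

noncomputable def intVec (u : Fin 2 → ℤ) : E2 :=
  (WithLp.equiv 2 (Fin 2 → ℝ)).symm (fun i => (u i : ℝ))

lemma intVec_apply (u : Fin 2 → ℤ) (i : Fin 2) : intVec u i = (u i : ℝ) := by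
  simp [intVec]

lemma euclid_ext {v w : E2} (h : ∀ i, v i = w i) : v = w := PiLp.ext h

lemma intVec_mem (u : Fin 2 → ℤ) : intVec u ∈ torusLattice := by
  have h : intVec u = u 0 • EuclideanSpace.single (0 : Fin 2) (1:ℝ)
      + u 1 • EuclideanSpace.single (1 : Fin 2) (1:ℝ) := by
    refine euclid_ext fun i => ?_
    fin_cases i <;>
      simp [intVec_apply, PiLp.add_apply, PiLp.smul_apply, EuclideanSpace.single_apply]
  rw [h]
  exact add_mem
    (zsmul_mem (AddSubgroup.subset_closure (Set.mem_range_self 0)) _)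
    (zsmul_mem (AddSubgroup.subset_closure (Set.mem_range_self 1)) _)

lemma matAction_apply (M : Mat2) (v : E2) (i : Fin 2) :
    matAction M v i = (M i 0 : ℝ) * v 0 + (M i 1 : ℝ) * v 1 := by
  fin_cases i <;> simp [matAction, Matrix.mulVec, dotProduct,
    Fin.sum_univ_two]

lemma matAction_mul (M M' : Mat2) (v : E2) :
    matAction (M * M') v = matAction M (matAction M' v) := by
  refine euclid_ext fun i => ?_
  simp only [matAction_apply, Matrix.mul_apply, Fin.sum_univ_two]
  push_cast
  ring

lemma matAction_one (v : E2) : matAction 1 v = v := by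
  refine euclid_ext fun i => ?_
  fin_cases i <;> simp [matAction_apply, Matrix.one_apply]

lemma matAction_addM (M M' : Mat2) (v : E2) :
    matAction (M + M') v = matAction M v + matAction M' v := by
  refine euclid_ext fun i => ?_
  simp only [matAction_apply, Matrix.add_apply, PiLp.add_apply]
  push_cast; ring

lemma matAction_zsmulM (c : ℤ) (M : Mat2) (v : E2) :
    matAction (c • M) v = c • matAction M v := by
  conv_rhs => rw [← Int.cast_smul_eq_zsmul ℝ]
  refine euclid_ext fun i => ?_
  simp only [matAction_apply, Matrix.smul_apply, smul_eq_mul, PiLp.smul_apply]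
  push_cast; ring

lemma matAction_addv (M : Mat2) (v w : E2) :
    matAction M (v + w) = matAction M v + matAction M w := by
  refine euclid_ext fun i => ?_
  simp only [matAction_apply, PiLp.add_apply]
  ring

lemma matAction_zero (M : Mat2) : matAction M 0 = 0 := by
  refine euclid_ext fun i => ?_
  simp [matAction_apply]

lemma matAction_smulv (M : Mat2) (s : ℝ) (v : E2) :
    matAction M (s • v) = s • matAction M v := by
  refine euclid_ext fun i => ?_
  simp only [matAction_apply, PiLp.smul_apply, smul_eq_mul]
  ring

lemma matAction_mem (M : Mat2) {v : E2} (hv : v ∈ torusLattice) :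
    matAction M v ∈ torusLattice := by
  let f : E2 →+ E2 :=
    { toFun := matAction M
      map_zero' := matAction_zero M
      map_add' := matAction_addv M }
  have : torusLattice ≤ AddSubgroup.comap f torusLattice := by
    rw [torusLattice, AddSubgroup.closure_le]
    rintro - ⟨i, rfl⟩
    show matAction M (EuclideanSpace.single i (1:ℝ)) ∈ torusLattice
    have h : matAction M (EuclideanSpace.single i (1:ℝ)) = intVec (fun j => M j i) := by
      refine euclid_ext fun j => ?_
      fin_cases i <;>
        simp [matAction_apply, intVec_apply, EuclideanSpace.single_apply]
    rw [h]; exact intVec_mem _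
  exact this hv

end TorusPf

namespace TorusPf

lemma norm_mk_le (v : E2) : ‖(QuotientAddGroup.mk v : Torus2)‖ ≤ ‖v‖ :=
  QuotientAddGroup.norm_mk_le_norm

lemma mk_eq_of_lattice {v l : E2} (hl : l ∈ torusLattice) :
    (QuotientAddGroup.mk v : Torus2) = QuotientAddGroup.mk (v - l) := by
  rw [QuotientAddGroup.eq]
  have : -v + (v - l) = -l := by abel
  rw [this]
  exact neg_mem hl

lemma norm_mk_le_of_lattice {v l : E2} (hl : l ∈ torusLattice) :
    ‖(QuotientAddGroup.mk v : Torus2)‖ ≤ ‖v - l‖ := by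
  rw [mk_eq_of_lattice hl]; exact norm_mk_le _

lemma dirichlet' (s : ℝ) {δ : ℝ} (hδ : 0 < δ) (M : ℕ) :
    ∃ k : ℕ, M ≤ k ∧ 1 ≤ k ∧ ∃ j : ℤ, |(k : ℝ) * s - (j : ℝ)| < δ := by
  obtain ⟨n, hn⟩ := exists_nat_gt ((M + 1 : ℝ) / δ)
  obtain ⟨j, k, hk0, hkn, hjk⟩ := Real.exists_int_int_abs_mul_sub_le s (Nat.succ_pos n)
  have hk' : ((k.toNat : ℝ)) = (k : ℝ) := by exact_mod_cast Int.toNat_of_nonneg hk0.le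
  have h1 : 1 ≤ k.toNat := by omega
  have hMle : M ≤ k.toNat * (M + 1) := by
    have := Nat.mul_le_mul_right (M + 1) h1
    omega
  refine ⟨k.toNat * (M + 1), hMle, by nlinarith, j * (M + 1), ?_⟩
  have hM1 : (0:ℝ) < (M:ℝ) + 1 := by positivity
  have key : ((k.toNat * (M + 1) : ℕ) : ℝ) * s - ((j * (M + 1) : ℤ) : ℝ)
      = ((M:ℝ) + 1) * ((k:ℝ) * s - (j:ℝ)) := by
    push_cast
    rw [hk']; ring
  rw [key, abs_mul, abs_of_pos hM1]
  have h2 : |(k:ℝ) * s - (j:ℝ)| ≤ 1 / ((n:ℝ) + 2) := by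
    have := hjk
    have hcast : ((((n:ℕ)+1 : ℕ)):ℝ) + 1 = (n:ℝ) + 2 := by push_cast; ring
    rw [hcast] at this
    exact this
  have hn2 : ((M:ℝ) + 1) / δ < (n:ℝ) + 2 := by
    have : ((M:ℝ) + 1) / δ < (n:ℝ) := hn
    linarith
  rw [div_lt_iff₀ hδ] at hn2
  have hpos : (0:ℝ) < (n:ℝ) + 2 := by positivity
  calc ((M:ℝ) + 1) * |(k:ℝ) * s - (j:ℝ)| ≤ ((M:ℝ) + 1) * (1 / ((n:ℝ) + 2)) :=
        mul_le_mul_of_nonneg_left h2 hM1.le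
    _ = ((M:ℝ) + 1) / ((n:ℝ) + 2) := by ring
    _ < δ := by rw [div_lt_iff₀ hpos]; nlinarith

lemma zsmul_intVec (j : ℤ) (u : Fin 2 → ℤ) : (j : ℝ) • intVec u = intVec (j • u) := by
  refine euclid_ext fun i => ?_
  simp only [PiLp.smul_apply, intVec_apply, Pi.smul_apply, smul_eq_mul]
  push_cast; ring

lemma rec_lemma (u : Fin 2 → ℤ) (s : ℝ) {δ : ℝ} (hδ : 0 < δ) (M : ℕ) :
    ∃ k : ℕ, M ≤ k ∧
      ‖((k:ℤ) • (QuotientAddGroup.mk (s • intVec u) : Torus2))‖ < δ := by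
  set C : ℝ := ‖intVec u‖ + 1 with hC
  have hC0 : 0 < C := by positivity
  obtain ⟨k, hMk, hk1, j, hj⟩ := dirichlet' s (div_pos hδ hC0) M
  refine ⟨k, hMk, ?_⟩
  have h1 : ((k:ℤ) • (QuotientAddGroup.mk (s • intVec u) : Torus2))
      = QuotientAddGroup.mk (((k:ℝ) * s) • intVec u) := by
    rw [← QuotientAddGroup.mk_zsmul]
    congr 1
    rw [← Int.cast_smul_eq_zsmul ℝ, smul_smul]
    norm_cast
  rw [h1]
  have h2 : ‖(QuotientAddGroup.mk (((k:ℝ) * s) • intVec u) : Torus2)‖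
      ≤ ‖((k:ℝ) * s) • intVec u - intVec (j • u)‖ :=
    norm_mk_le_of_lattice (intVec_mem _)
  have h3 : ((k:ℝ) * s) • intVec u - intVec (j • u)
      = ((k:ℝ) * s - (j:ℝ)) • intVec u := by
    rw [← zsmul_intVec, sub_smul]
  have h4 : ‖((k:ℝ) * s) • intVec u - intVec (j • u)‖
      = |(k:ℝ) * s - (j:ℝ)| * ‖intVec u‖ := by
    rw [h3, norm_smul, Real.norm_eq_abs]
  have h5 : |(k:ℝ) * s - (j:ℝ)| * ‖intVec u‖ < δ := by
    have hnn : (0:ℝ) ≤ ‖intVec u‖ := norm_nonneg _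
    have habs : (0:ℝ) ≤ |(k:ℝ) * s - (j:ℝ)| := abs_nonneg _
    have hdc : (δ / C) * C = δ := div_mul_cancel₀ δ (ne_of_gt hC0)
    nlinarith [div_pos hδ hC0]
  linarith [h2, h4.le, h4.ge]

lemma decomp (N : Mat2) (hdetN : N 0 0 * N 1 1 - N 0 1 * N 1 0 = 0) (v : E2) :
    ∃ (u : Fin 2 → ℤ) (s : ℝ), matAction N v = s • intVec u := by
  have hdc : (N 0 0 : ℝ) * (N 1 1 : ℝ) = (N 0 1 : ℝ) * (N 1 0 : ℝ) := by
    have : N 0 0 * N 1 1 = N 0 1 * N 1 0 := by omega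
    exact_mod_cast this
  by_cases h0 : N 0 0 = 0 ∧ N 1 0 = 0
  · refine ⟨fun i => N i 1, v 1, euclid_ext fun i => ?_⟩
    simp only [matAction_apply, PiLp.smul_apply, intVec_apply, smul_eq_mul]
    fin_cases i <;> simp [h0.1, h0.2] <;> ring
  · rcases not_and_or.mp h0 with h00 | h10
    · have h00' : (N 0 0 : ℝ) ≠ 0 := by exact_mod_cast h00
      refine ⟨fun i => N i 0, v 0 + v 1 * ((N 0 1 : ℝ) / (N 0 0 : ℝ)),
        euclid_ext fun i => ?_⟩
      simp only [matAction_apply, PiLp.smul_apply, intVec_apply, smul_eq_mul]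
      fin_cases i
      · simp only [Fin.zero_eta, Fin.mk_one, Fin.isValue]
        field_simp
      · simp only [Fin.zero_eta, Fin.mk_one, Fin.isValue]
        field_simp
        linear_combination v 1 * hdc
    · have h10' : (N 1 0 : ℝ) ≠ 0 := by exact_mod_cast h10
      refine ⟨fun i => N i 0, v 0 + v 1 * ((N 1 1 : ℝ) / (N 1 0 : ℝ)),
        euclid_ext fun i => ?_⟩
      simp only [matAction_apply, PiLp.smul_apply, intVec_apply, smul_eq_mul]
      fin_cases i
      · simp only [Fin.zero_eta, Fin.mk_one, Fin.isValue]
        field_simp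
        linear_combination - v 1 * hdc
      · simp only [Fin.zero_eta, Fin.mk_one, Fin.isValue]
        field_simp

end TorusPf

namespace TorusPf

lemma entry_ext {M M' : Mat2} (h : ∀ i j, M i j = M' i j) : M = M' := by
  ext i j; exact h i j

lemma mul_entry (M M' : Mat2) (i j : Fin 2) :
    (M * M') i j = M i 0 * M' 0 j + M i 1 * M' 1 j := by
  simp [Matrix.mul_apply, Fin.sum_univ_two]

lemma trace_constraint (A : Mat2) (hdet : A.det = 1 ∨ A.det = -1)
    (heig : EigenvaluesModulusOne A) :
    (A.det = -1 ∧ A.trace = 0) ∨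
      (A.det = 1 ∧ (A.trace = -2 ∨ A.trace = -1 ∨ A.trace = 0 ∨ A.trace = 1 ∨ A.trace = 2)) := by
  set B := A.map (Int.cast : ℤ → ℂ) with hB
  have hBdeg : B.charpoly.natDegree = 2 := by
    rw [Matrix.charpoly_natDegree_eq_dim]; simp
  have hsplits : B.charpoly.Splits := IsAlgClosed.splits _
  have hcard : B.charpoly.roots.card = 2 := by
    rw [(Polynomial.splits_iff_card_roots).mp hsplits, hBdeg]
  obtain ⟨μ1, μ2, hroots⟩ := Multiset.card_eq_two.mp hcard
  have hμ1 : ‖μ1‖ = 1 := heig μ1 (by rw [hroots]; simp)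
  have hμ2 : ‖μ2‖ = 1 := heig μ2 (by rw [hroots]; simp)
  have hdetB : (A.det : ℂ) = μ1 * μ2 := by
    have h1 : B.det = B.charpoly.roots.prod := Matrix.det_eq_prod_roots_charpoly B
    have h2 : B.det = (A.det : ℂ) := by
      rw [hB, Matrix.det_fin_two, Matrix.det_fin_two]
      simp [Matrix.map_apply]
    rw [← h2, h1, hroots]; simp
  have htrB : (A.trace : ℂ) = μ1 + μ2 := by
    have h1 : B.trace = B.charpoly.roots.sum := Matrix.trace_eq_sum_roots_charpoly B
    have h2 : B.trace = (A.trace : ℂ) := by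
      rw [hB, Matrix.trace_fin_two, Matrix.trace_fin_two]
      simp [Matrix.map_apply]
    rw [← h2, h1, hroots]; simp
  have htrabs : |A.trace| ≤ 2 := by
    have h1 : ‖(A.trace : ℂ)‖ ≤ 2 := by
      rw [htrB]
      calc ‖μ1 + μ2‖ ≤ ‖μ1‖ + ‖μ2‖ := norm_add_le _ _
        _ = 2 := by rw [hμ1, hμ2]; norm_num
    have h2 : ‖(A.trace : ℂ)‖ = |(A.trace : ℝ)| := Complex.norm_intCast _
    rw [h2] at h1
    exact_mod_cast h1
  have hbd := abs_le.mp htrabs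
  rcases hdet with hd | hd
  · right
    exact ⟨hd, by omega⟩
  · left
    refine ⟨hd, ?_⟩
    have hμ1ne : μ1 ≠ 0 := by
      intro h; rw [h] at hμ1; simp at hμ1
    have hconj1 : μ1 * (starRingEnd ℂ) μ1 = 1 := by
      rw [Complex.mul_conj, Complex.normSq_eq_norm_sq, hμ1]; norm_num
    have hprod : μ1 * μ2 = -1 := by
      rw [← hdetB, hd]; norm_num
    have hμ2eq : μ2 = -(starRingEnd ℂ) μ1 := by
      have : μ1 * μ2 = μ1 * (-(starRingEnd ℂ) μ1) := by
        rw [hprod, mul_neg, hconj1]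
      exact mul_left_cancel₀ hμ1ne this
    have hμ1eq : (starRingEnd ℂ) μ2 = -μ1 := by
      rw [hμ2eq, map_neg, Complex.conj_conj]
    have hreal : (starRingEnd ℂ) (A.trace : ℂ) = (A.trace : ℂ) := by simp
    have hneg : (A.trace : ℂ) = -(A.trace : ℂ) := by
      conv_lhs => rw [← hreal, htrB, map_add, hμ1eq]
      rw [htrB]
      linear_combination hμ2eq
    have h0 : (A.trace : ℂ) = 0 := by
      have h2 : (2 : ℂ) * (A.trace : ℂ) = 0 := by linear_combination hneg
      simpa using mul_eq_zero.mp h2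
    exact_mod_cast h0

lemma struct (A : Mat2) (hdet : A.det = 1 ∨ A.det = -1)
    (heig : EigenvaluesModulusOne A) :
    ∃ (m : ℕ) (e : ℤ) (N : Mat2), 0 < m ∧ (e = 1 ∨ e = -1) ∧ e ^ m = 1 ∧
      A ^ m = 1 + N ∧ N * N = 0 ∧ A * N = e • N ∧ N * A = e • N := by
  obtain ⟨hd, ht⟩ | ⟨hd, ht⟩ := trace_constraint A hdet heig
  · -- det = -1, trace = 0 : A^2 = 1
    rw [Matrix.det_fin_two] at hd
    rw [Matrix.trace_fin_two] at ht
    have h2 : A * A = 1 := by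
      refine entry_ext fun i j => ?_
      fin_cases i <;> fin_cases j <;> rw [mul_entry] <;>
        simp only [Matrix.one_apply, if_true, if_false, Fin.isValue] <;> norm_num
      · linear_combination A 0 0 * ht - hd
      · linear_combination A 0 1 * ht
      · linear_combination A 1 0 * ht
      · linear_combination A 1 1 * ht - hd
    exact ⟨2, 1, 0, by norm_num, Or.inl rfl, one_pow 2,
      by rw [pow_two, h2, add_zero], by rw [mul_zero], by simp, by simp⟩
  · rw [Matrix.det_fin_two] at hd
    rw [Matrix.trace_fin_two] at ht
    rcases ht with ht | ht | ht | ht | ht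
    · -- trace = -2
      have h2 : A * A = -A - A - 1 := by
        refine entry_ext fun i j => ?_
        fin_cases i <;> fin_cases j <;> rw [mul_entry] <;>
          simp only [Matrix.sub_apply, Matrix.neg_apply, Matrix.one_apply, if_true, if_false,
            Fin.isValue] <;> norm_num
        · linear_combination A 0 0 * ht - hd
        · linear_combination A 0 1 * ht
        · linear_combination A 1 0 * ht
        · linear_combination A 1 1 * ht - hd
      refine ⟨2, -1, A * A - 1, by norm_num, Or.inr rfl, by norm_num,
        by rw [pow_two]; abel, ?_, ?_, ?_⟩
      · have e1 : (A*A - 1) * (A*A - 1)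
            = (A*A)*(A*A) - (A*A) - (A*A) + 1 := by noncomm_ring
        rw [e1, h2]
        have e2 : (-A - A - 1 : Mat2) * (-A - A - 1)
            = (A*A) + (A*A) + (A*A) + (A*A) + (A + A + A + A) + 1 := by noncomm_ring
        rw [e2, h2]
        abel
      · have e1 : A * (A*A - 1) = A*(A*A) - A := by noncomm_ring
        have e2 : ((-1 : ℤ) • (A*A - 1) : Mat2) = -(A*A) + 1 := by
          rw [neg_smul, one_smul]; abel
        rw [e1, e2, h2]
        have e3 : A * (-A - A - 1 : Mat2) = -(A*A) - (A*A) - A := by noncomm_ring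
        rw [e3, h2]
        abel
      · have e1 : (A*A - 1) * A = (A*A)*A - A := by noncomm_ring
        have e2 : ((-1 : ℤ) • (A*A - 1) : Mat2) = -(A*A) + 1 := by
          rw [neg_smul, one_smul]; abel
        rw [e1, e2, h2]
        have e3 : (-A - A - 1 : Mat2) * A = -(A*A) - (A*A) - A := by noncomm_ring
        rw [e3, h2]
        abel
    · -- trace = -1 : A^3 = 1
      have h2 : A * A = -A - 1 := by
        refine entry_ext fun i j => ?_
        fin_cases i <;> fin_cases j <;> rw [mul_entry] <;>
          simp only [Matrix.sub_apply, Matrix.neg_apply, Matrix.one_apply, if_true, if_false,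
            Fin.isValue] <;> norm_num
        · linear_combination A 0 0 * ht - hd
        · linear_combination A 0 1 * ht
        · linear_combination A 1 0 * ht
        · linear_combination A 1 1 * ht - hd
      have h3 : A ^ 3 = 1 := by
        have e0 : A ^ 3 = (A * A) * A := by rw [pow_succ, pow_two]
        rw [e0, h2]
        have e1 : (-A - 1 : Mat2) * A = -(A*A) - A := by noncomm_ring
        rw [e1, h2]
        abel
      exact ⟨3, 1, 0, by norm_num, Or.inl rfl, one_pow 3,
        by rw [h3, add_zero], by rw [mul_zero], by simp, by simp⟩
    · -- trace = 0, det = 1 : A^2 = -1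
      have h2 : A * A = -1 := by
        refine entry_ext fun i j => ?_
        fin_cases i <;> fin_cases j <;> rw [mul_entry] <;>
          simp only [Matrix.neg_apply, Matrix.one_apply, if_true, if_false,
            Fin.isValue] <;> norm_num
        · linear_combination A 0 0 * ht - hd
        · linear_combination A 0 1 * ht
        · linear_combination A 1 0 * ht
        · linear_combination A 1 1 * ht - hd
      have h4 : A ^ 4 = 1 := by
        have e0 : A ^ 4 = (A * A) * (A * A) := by
          rw [show (4:ℕ) = 2*2 from rfl, pow_mul, pow_two, pow_two]
        rw [e0, h2, neg_one_mul, neg_neg]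
      exact ⟨4, 1, 0, by norm_num, Or.inl rfl, one_pow 4,
        by rw [h4, add_zero], by rw [mul_zero], by simp, by simp⟩
    · -- trace = 1 : A^6 = 1
      have h2 : A * A = A - 1 := by
        refine entry_ext fun i j => ?_
        fin_cases i <;> fin_cases j <;> rw [mul_entry] <;>
          simp only [Matrix.sub_apply, Matrix.one_apply, if_true, if_false,
            Fin.isValue] <;> norm_num
        · linear_combination A 0 0 * ht - hd
        · linear_combination A 0 1 * ht
        · linear_combination A 1 0 * ht
        · linear_combination A 1 1 * ht - hd
      have h3 : A ^ 3 = -1 := by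
        have e0 : A ^ 3 = (A * A) * A := by rw [pow_succ, pow_two]
        rw [e0, h2]
        have e1 : (A - 1 : Mat2) * A = A*A - A := by noncomm_ring
        rw [e1, h2]
        abel
      have h6 : A ^ 6 = 1 := by
        have e0 : A ^ 6 = A ^ 3 * A ^ 3 := by rw [show (6:ℕ) = 3*2 from rfl, pow_mul, pow_two]
        rw [e0, h3, neg_one_mul, neg_neg]
      exact ⟨6, 1, 0, by norm_num, Or.inl rfl, one_pow 6,
        by rw [h6, add_zero], by rw [mul_zero], by simp, by simp⟩
    · -- trace = 2 : parabolic, N = A - 1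
      have h2 : A * A = A + A - 1 := by
        refine entry_ext fun i j => ?_
        fin_cases i <;> fin_cases j <;> rw [mul_entry] <;>
          simp only [Matrix.sub_apply, Matrix.add_apply, Matrix.one_apply, if_true, if_false,
            Fin.isValue] <;> norm_num
        · linear_combination A 0 0 * ht - hd
        · linear_combination A 0 1 * ht
        · linear_combination A 1 0 * ht
        · linear_combination A 1 1 * ht - hd
      refine ⟨1, 1, A - 1, by norm_num, Or.inl rfl, one_pow 1,
        by rw [pow_one]; abel, ?_, ?_, ?_⟩
      · have e1 : (A - 1 : Mat2) * (A - 1) = A*A - A - A + 1 := by noncomm_ring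
        rw [e1, h2]; abel
      · have e1 : A * (A - 1 : Mat2) = A*A - A := by noncomm_ring
        rw [one_smul, e1, h2]; abel
      · have e1 : (A - 1 : Mat2) * A = A*A - A := by noncomm_ring
        rw [one_smul, e1, h2]; abel

end TorusPf

namespace TorusPf

lemma upperDensity_of_empty {S : Set ℕ} (h : ∀ n, n ∉ S) : upperDensity S = 0 := by
  unfold upperDensity
  have hf : (fun N : ℕ => (((Finset.Icc 1 N).filter (fun n => n ∈ S)).card : ℝ) / N)
      = fun _ : ℕ => (0 : ℝ) := by
    funext N
    rw [Finset.filter_false_of_mem (fun n _ => h n)]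
    simp
  rw [hf, Filter.limsup_const]

lemma key (A : Mat2) (m : ℕ) (e : ℤ) (N : Mat2)
    (hm : 0 < m) (he : e = 1 ∨ e = -1) (hem : e ^ m = 1)
    (hAm : A ^ m = 1 + N) (hN2 : N * N = 0) (hAN : A * N = e • N) (hNA : N * A = e • N)
    (TA : Torus2 → Torus2) (hTAcont : Continuous TA)
    (hTA : ∀ v : E2, TA (QuotientAddGroup.mk v) = QuotientAddGroup.mk (matAction A v))
    (x : Torus2) :
    MinimalSubset TA (closure (Set.range fun n : ℕ => TA^[n] x)) ∧
      IsMLSOn TA (closure (Set.range fun n : ℕ => TA^[n] x)) := by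
  have he2 : e * e = 1 := by rcases he with rfl | rfl <;> norm_num
  have hen : ∀ n : ℕ, e ^ n = 1 ∨ e ^ n = -1 := by
    intro n
    rcases he with rfl | rfl
    · left; exact one_pow n
    · rcases Nat.even_or_odd n with hpar | hpar
      · left; exact hpar.neg_one_pow
      · right; exact hpar.neg_one_pow
  -- lift x
  obtain ⟨x', rfl⟩ : ∃ v : E2, (QuotientAddGroup.mk v : Torus2) = x := by
    obtain ⟨v, hv⟩ := QuotientAddGroup.mk'_surjective torusLattice x
    exact ⟨v, hv⟩
  set w : E2 := matAction N x' with hw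
  set b : Torus2 := QuotientAddGroup.mk w with hb
  set S : Set Torus2 := ((AddSubgroup.zmultiples b : AddSubgroup Torus2) : Set Torus2) with hS
  set G : Set Torus2 := closure S with hG
  set Gsub : AddSubgroup Torus2 := (AddSubgroup.zmultiples b).topologicalClosure with hGsub
  have hGsubco : (Gsub : Set Torus2) = G := rfl
  have hbS : b ∈ S := by
    rw [hS]
    exact ⟨1, one_zsmul b⟩
  have hbG : b ∈ G := subset_closure hbS
  have h0G : (0 : Torus2) ∈ G := subset_closure (AddSubgroup.zero_mem _)
  have hGclosed : IsClosed G := isClosed_closure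
  -- iterates on representatives
  have h_iter : ∀ (n : ℕ) (v : E2), TA^[n] (QuotientAddGroup.mk v) = QuotientAddGroup.mk (matAction (A ^ n) v) := by
    intro n
    induction n with
    | zero => intro v; rw [Function.iterate_zero_apply, pow_zero, matAction_one]
    | succ n ih =>
      intro v
      rw [Function.iterate_succ_apply', ih]
      rw [hTA (matAction (A ^ n) v), ← matAction_mul, ← pow_succ']
  -- additivity
  have hTA_add : ∀ p p' : Torus2, TA (p + p') = TA p + TA p' := by
    intro p p'
    induction p using QuotientAddGroup.induction_on with | H v =>
    induction p' using QuotientAddGroup.induction_on with | H v' =>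
    rw [← QuotientAddGroup.mk_add, hTA, hTA, hTA, matAction_addv, QuotientAddGroup.mk_add]
  have h_hom : ∀ (n : ℕ) (p p' : Torus2), TA^[n] (p + p') = TA^[n] p + TA^[n] p' := by
    intro n
    induction n with
    | zero => intro p p'; simp
    | succ n ih =>
      intro p p'
      rw [Function.iterate_succ_apply', Function.iterate_succ_apply',
        Function.iterate_succ_apply', ih, hTA_add]
  set φ : ℕ → (Torus2 →+ Torus2) := fun n => AddMonoidHom.mk' (TA^[n]) (h_hom n) with hφ
  have hφ_apply : ∀ (n : ℕ) (p : Torus2), φ n p = TA^[n] p := fun _ _ => rfl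
  -- matrix power identities
  have h_ANpow : ∀ n : ℕ, A ^ n * N = e ^ n • N := by
    intro n
    induction n with
    | zero => rw [pow_zero, pow_zero, one_mul, one_smul]
    | succ n ih =>
      rw [pow_succ' (M := Mat2), mul_assoc, ih, mul_smul_comm, hAN, smul_smul, ← pow_succ]
  have h_NApow : ∀ n : ℕ, N * A ^ n = e ^ n • N := by
    intro n
    induction n with
    | zero => rw [pow_zero, pow_zero, mul_one, one_smul]
    | succ n ih =>
      rw [pow_succ, ← mul_assoc, ih, smul_mul_assoc, hNA, smul_smul, ← pow_succ]
  have h_1N : ∀ k : ℕ, (1 + N) ^ k = 1 + (k : ℤ) • N := by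
    intro k
    induction k with
    | zero => simp
    | succ k ih =>
      rw [pow_succ, ih]
      have expand : (1 + (k : ℤ) • N) * (1 + N)
          = 1 + N + (k : ℤ) • N + (k : ℤ) • (N * N) := by
        rw [add_mul, one_mul, mul_add, mul_one, smul_mul_assoc]
        abel
      rw [expand, hN2, smul_zero, add_zero]
      have : ((k + 1 : ℕ) : ℤ) • N = (k : ℤ) • N + N := by
        push_cast
        rw [add_smul, one_smul]
      rw [this]
      abel
  have h_pow : ∀ (k r : ℕ), A ^ (m * k + r) = A ^ r + ((k : ℤ) * e ^ r) • N := by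
    intro k r
    rw [pow_add, pow_mul, hAm, h_1N, add_mul, one_mul, smul_mul_assoc, h_NApow,
      smul_smul]
  -- orbit formula
  have h_orbit : ∀ (k r : ℕ),
      TA^[m * k + r] (QuotientAddGroup.mk x') = TA^[r] (QuotientAddGroup.mk x') + ((k : ℤ) * e ^ r) • b := by
    intro k r
    rw [h_iter, h_iter, h_pow, matAction_addM, matAction_zsmulM]
    rw [QuotientAddGroup.mk_add, QuotientAddGroup.mk_zsmul]
  -- action on multiples of b
  have h_phib : ∀ n : ℕ, TA^[n] b = e ^ n • b := by
    intro n
    rw [hb, h_iter, hw, matAction_mul (A ^ n) N x' |>.symm, h_ANpow,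
      matAction_zsmulM, QuotientAddGroup.mk_zsmul]
  have h_phizb : ∀ (n : ℕ) (c : ℤ), TA^[n] (c • b) = (c * e ^ n) • b := by
    intro n c
    have : TA^[n] (c • b) = φ n (c • b) := rfl
    rw [this, map_zsmul, hφ_apply, h_phib, smul_smul]
  -- TA^[n] maps G to G
  have h_mapsG : ∀ (n : ℕ) (g : Torus2), g ∈ G → TA^[n] g ∈ G := by
    intro n g hg
    have h1 : TA^[n] '' S ⊆ S := by
      rintro - ⟨-, ⟨c, rfl⟩, rfl⟩
      rw [h_phizb]
      exact ⟨c * e ^ n, rfl⟩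
    have h2 : TA^[n] '' G ⊆ closure (TA^[n] '' S) :=
      image_closure_subset_closure_image (hTAcont.iterate n)
    have h3 : closure (TA^[n] '' S) ⊆ G := closure_mono h1
    exact h3 (h2 ⟨g, hg, rfl⟩)
  -- norm preservation on G
  have h_normG : ∀ (n : ℕ) (g : Torus2), g ∈ G → ‖TA^[n] g‖ = ‖g‖ := by
    intro n
    have heqon : Set.EqOn (fun g => ‖TA^[n] g‖) (fun g => ‖g‖) S := by
      rintro - ⟨c, rfl⟩
      simp only
      rw [h_phizb]
      rcases hen n with h1 | h1
      · rw [h1, mul_one]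
      · rw [h1, mul_neg_one, neg_smul, norm_neg]
    have := heqon.closure ((hTAcont.iterate n).norm) continuous_norm
    intro g hg
    exact this hg
  -- isometry on cosets of G
  have h_distG : ∀ (n : ℕ) (y z : Torus2), y - z ∈ G →
      dist (TA^[n] y) (TA^[n] z) = dist y z := by
    intro n y z hyz
    rw [dist_eq_norm, dist_eq_norm]
    have h1 : TA^[n] y - TA^[n] z = TA^[n] (y - z) := by
      rw [show TA^[n] y = φ n y from rfl, show TA^[n] z = φ n z from rfl,
        show TA^[n] (y - z) = φ n (y - z) from rfl, ← map_sub]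
    rw [h1, h_normG n _ hyz]
  -- recurrence
  have h_rec : ∀ δ : ℝ, 0 < δ → ∀ M : ℕ, ∃ k : ℕ, M ≤ k ∧ ‖(k : ℤ) • b‖ < δ := by
    have hdetN : N 0 0 * N 1 1 - N 0 1 * N 1 0 = 0 := by
      have h1 : N.det * N.det = 0 := by
        rw [← Matrix.det_mul, hN2, Matrix.det_zero]
      have h2 : N.det = 0 := by
        rcases mul_eq_zero.mp h1 with h | h <;> exact h
      rw [Matrix.det_fin_two] at h2
      omega
    obtain ⟨u, s, hus⟩ := decomp N hdetN x'
    intro δ hδ M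
    obtain ⟨k, hMk, hk⟩ := rec_lemma u s hδ M
    refine ⟨k, hMk, ?_⟩
    rw [hb, hw, hus]
    exact hk
  -- approximation of elements of G by natural multiples of b
  have h_approx : ∀ g ∈ G, ∀ δ : ℝ, 0 < δ → ∀ M : ℕ,
      ∃ k : ℕ, M ≤ k ∧ ‖g - (k : ℤ) • b‖ < δ := by
    intro g hg δ hδ M
    obtain ⟨p, hpS, hpg⟩ := Metric.mem_closure_iff.mp hg (δ / 2) (by linarith)
    obtain ⟨j, rfl⟩ := hpS
    obtain ⟨k0, hk0M, hk0⟩ := h_rec (δ / 2) (by linarith) (M + j.natAbs)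
    refine ⟨(j + (k0 : ℤ)).toNat, ?_, ?_⟩
    · omega
    · have hcast : ((j + (k0 : ℤ)).toNat : ℤ) = j + k0 := by omega
      rw [hcast]
      have h1 : g - (j + (k0 : ℤ)) • b = (g - j • b) - (k0 : ℤ) • b := by
        rw [add_smul]; abel
      rw [h1]
      have h2 : ‖(g - j • b) - (k0 : ℤ) • b‖ ≤ ‖g - j • b‖ + ‖(k0 : ℤ) • b‖ :=
        norm_sub_le _ _
      have h3 : ‖g - j • b‖ < δ / 2 := by
        rw [← dist_eq_norm]; exact hpg
      linarith
  -- components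
  set xr : ℕ → Torus2 := fun r => TA^[r] (QuotientAddGroup.mk x') with hxr
  set C : ℕ → Set Torus2 := fun r => {y : Torus2 | y - xr r ∈ G} with hC
  set K : Set Torus2 := ⋃ r ∈ Finset.range m, C r with hK
  have hC_closed : ∀ r, IsClosed (C r) := by
    intro r
    exact hGclosed.preimage (continuous_id.sub continuous_const)
  have hK_closed : IsClosed K := by
    rw [hK]
    exact Set.Finite.isClosed_biUnion (Finset.finite_toSet _) (fun r _ => hC_closed r)
  have hmemK : ∀ y : Torus2, y ∈ K ↔ ∃ r, r < m ∧ y - xr r ∈ G := by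
    intro y
    rw [hK]
    simp only [Set.mem_iUnion, Finset.mem_range, Set.mem_setOf_eq, exists_prop]
    rfl
  -- orbit lies in K
  have h_orbit_in : ∀ n : ℕ, TA^[n] (QuotientAddGroup.mk x') ∈ K := by
    intro n
    rw [hmemK]
    refine ⟨n % m, Nat.mod_lt n hm, ?_⟩
    have hdm : m * (n / m) + n % m = n := Nat.div_add_mod n m
    have := h_orbit (n / m) (n % m)
    rw [hdm] at this
    rw [this]
    have : xr (n % m) + (((n / m : ℕ) : ℤ) * e ^ (n % m)) • b - xr (n % m)
        = (((n / m : ℕ) : ℤ) * e ^ (n % m)) • b := by abel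
    rw [this]
    exact subset_closure ⟨_, rfl⟩
  have hxK : QuotientAddGroup.mk x' ∈ K := by
    have := h_orbit_in 0
    rwa [Function.iterate_zero_apply] at this
  -- sign smul norm helper
  have h_sgn_norm : ∀ (σ : ℤ), σ = 1 ∨ σ = -1 → ∀ v : Torus2, ‖σ • v‖ = ‖v‖ := by
    rintro σ (rfl | rfl) v
    · rw [one_zsmul]
    · rw [neg_smul, one_zsmul, norm_neg]
  have h_sgn_mem : ∀ (σ : ℤ) (v : Torus2), v ∈ G → σ • v ∈ G := by
    intro σ v hv
    have : v ∈ Gsub := by rw [← hGsubco] at hv; exact hv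
    have := Gsub.zsmul_mem this σ
    rwa [← hGsubco]
  have hG_add : ∀ v v' : Torus2, v ∈ G → v' ∈ G → v + v' ∈ G := by
    intro v v' hv hv'
    rw [← hGsubco] at hv hv' ⊢
    exact Gsub.add_mem hv hv'
  have hG_sub : ∀ v v' : Torus2, v ∈ G → v' ∈ G → v - v' ∈ G := by
    intro v v' hv hv'
    rw [← hGsubco] at hv hv' ⊢
    exact Gsub.sub_mem hv hv'
  have hG_neg : ∀ v : Torus2, v ∈ G → -v ∈ G := by
    intro v hv
    rw [← hGsubco] at hv ⊢
    exact Gsub.neg_mem hv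
  -- K is the orbit closure
  have hKorb : K = closure (Set.range fun n : ℕ => TA^[n] (QuotientAddGroup.mk x')) := by
    apply Set.Subset.antisymm
    · -- K ⊆ closure orbit
      intro y hy
      obtain ⟨r, hrm, hyr⟩ := (hmemK y).mp hy
      rw [Metric.mem_closure_iff]
      intro δ hδ
      set σ : ℤ := e ^ r with hσ
      have hσpm : σ = 1 ∨ σ = -1 := hen r
      have hσσ : σ * σ = 1 := by rcases hσpm with h | h <;> rw [h] <;> norm_num
      obtain ⟨k, -, hk⟩ := h_approx (σ • (y - xr r)) (h_sgn_mem σ _ hyr) δ hδ 0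
      refine ⟨TA^[m * k + r] (QuotientAddGroup.mk x'), ⟨m * k + r, rfl⟩, ?_⟩
      rw [h_orbit k r, dist_eq_norm]
      have h1 : y - (xr r + ((k : ℤ) * σ) • b) = (y - xr r) - ((k : ℤ) * σ) • b := by
        abel
      rw [h1]
      have h2 : σ • ((y - xr r) - ((k : ℤ) * σ) • b)
          = σ • (y - xr r) - (k : ℤ) • b := by
        rw [smul_sub, smul_smul]
        have : σ * ((k : ℤ) * σ) = (k : ℤ) * (σ * σ) := by ring
        rw [this, hσσ, mul_one]
      calc ‖(y - xr r) - ((k : ℤ) * σ) • b‖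
          = ‖σ • ((y - xr r) - ((k : ℤ) * σ) • b)‖ := (h_sgn_norm σ hσpm _).symm
        _ = ‖σ • (y - xr r) - (k : ℤ) • b‖ := by rw [h2]
        _ < δ := hk
    · -- closure orbit ⊆ K
      exact closure_minimal (by rintro - ⟨n, rfl⟩; exact h_orbit_in n) hK_closed
  -- MapsTo
  have hK_maps : Set.MapsTo TA K K := by
    intro y hy
    obtain ⟨r, hrm, hyr⟩ := (hmemK y).mp hy
    have h1 : TA y - TA (xr r) ∈ G := by
      have : TA y - TA (xr r) = TA^[1] y - TA^[1] (xr r) := by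
        rw [Function.iterate_one]
      rw [this, show TA^[1] y = φ 1 y from rfl, show TA^[1] (xr r) = φ 1 (xr r) from rfl,
        ← map_sub]
      exact h_mapsG 1 _ hyr
    have h2 : TA (xr r) = xr (r + 1) := by
      rw [hxr]
      simp only
      rw [← Function.iterate_succ_apply' TA r]
    rcases Nat.lt_or_ge (r + 1) m with hr1 | hr1
    · rw [hmemK]
      exact ⟨r + 1, hr1, by rw [← h2]; exact h1⟩
    · have hrm1 : r + 1 = m := by omega
      have h3 : xr m = xr 0 + b := by
        have h := h_orbit 1 0
        norm_num at h
        rw [hxr]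
        simpa using h
      rw [hmemK]
      refine ⟨0, hm, ?_⟩
      have h4 : TA y - xr 0 = (TA y - TA (xr r)) + b := by
        rw [h2, hrm1, h3]
        abel
      rw [h4]
      exact hG_add _ _ h1 hbG
  -- minimality
  have h_min : ∀ y ∈ K, K ⊆ closure (Set.range fun n : ℕ => TA^[n] y) := by
    intro y hy
    obtain ⟨r, hrm, hyr⟩ := (hmemK y).mp hy
    set σ : ℤ := e ^ r with hσ
    have hσpm : σ = 1 ∨ σ = -1 := hen r
    have hσσ : σ * σ = 1 := by rcases hσpm with h | h <;> rw [h] <;> norm_num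
    set h0 : Torus2 := y - xr r with hh0
    -- step A : x ∈ closure orbit y
    have hstepA : QuotientAddGroup.mk x' ∈ closure (Set.range fun n : ℕ => TA^[n] y) := by
      rw [Metric.mem_closure_iff]
      intro δ hδ
      obtain ⟨k, hk1, hk⟩ := h_approx (-(σ • h0))
        (hG_neg _ (h_sgn_mem σ _ hyr)) δ hδ 1
      set n : ℕ := m * k - r with hn
      have hnr : n + r = m * k := by
        have : r < m * k := lt_of_lt_of_le hrm (Nat.le_mul_of_pos_right m (by omega))
        omega
      have hyn : TA^[n] y = QuotientAddGroup.mk x' + (k : ℤ) • b + TA^[n] h0 := by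
        have hydecomp : y = xr r + h0 := by rw [hh0]; abel
        have : TA^[n] y = TA^[n] (xr r) + TA^[n] h0 := by
          rw [hydecomp, show TA^[n] (xr r + h0) = φ n (xr r + h0) from rfl, map_add]
          rfl
        rw [this]
        have h5 : TA^[n] (xr r) = TA^[n + r] (QuotientAddGroup.mk x') := by
          rw [hxr]
          simp only
          rw [← Function.iterate_add_apply]
        rw [h5, hnr, show m * k = m * k + 0 from (Nat.add_zero _).symm,
          h_orbit k 0, pow_zero, mul_one]
        rfl
      have hne : e ^ n = σ := by
        have h6 : e ^ n * σ = 1 := by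
          rw [hσ, ← pow_add, hnr, pow_mul, hem, one_pow]
        calc e ^ n = e ^ n * (σ * σ) := by rw [hσσ, mul_one]
          _ = (e ^ n * σ) * σ := by ring
          _ = σ := by rw [h6, one_mul]
      refine ⟨TA^[n] y, ⟨n, rfl⟩, ?_⟩
      rw [dist_eq_norm, hyn]
      have harg : (k : ℤ) • b + TA^[n] h0 = TA^[n] (((k : ℤ) * σ) • b + h0) := by
        rw [show TA^[n] (((k : ℤ) * σ) • b + h0) = φ n (((k : ℤ) * σ) • b + h0) from rfl,
          map_add, hφ_apply, hφ_apply, h_phizb, hne]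
        have : (k : ℤ) * σ * σ = (k : ℤ) * (σ * σ) := by ring
        rw [this, hσσ, mul_one]
      have hargG : ((k : ℤ) * σ) • b + h0 ∈ G := by
        apply hG_add
        · exact subset_closure ⟨_, rfl⟩
        · exact hyr
      have h9 : QuotientAddGroup.mk x' - (QuotientAddGroup.mk x' + (k : ℤ) • b + TA^[n] h0)
          = -((k : ℤ) • b + TA^[n] h0) := by abel
      rw [h9, norm_neg, harg, h_normG n _ hargG]
      calc ‖((k : ℤ) * σ) • b + h0‖ = ‖σ • (((k : ℤ) * σ) • b + h0)‖ :=
            (h_sgn_norm σ hσpm _).symm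
        _ = ‖(k : ℤ) • b + σ • h0‖ := by
            rw [smul_add, smul_smul]
            have : σ * ((k : ℤ) * σ) = (k : ℤ) * (σ * σ) := by ring
            rw [this, hσσ, mul_one]
        _ = ‖-(σ • h0) - (k : ℤ) • b‖ := by
            rw [← norm_neg]
            congr 1
            abel
        _ < δ := hk
    -- step B : closure orbit x ⊆ closure orbit y
    rw [hKorb]
    apply closure_minimal ?_ isClosed_closure
    rintro - ⟨j, rfl⟩
    have h10 : TA^[j] '' closure (Set.range fun n : ℕ => TA^[n] y)
        ⊆ closure (TA^[j] '' Set.range fun n : ℕ => TA^[n] y) :=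
      image_closure_subset_closure_image (hTAcont.iterate j)
    have h11 : TA^[j] '' (Set.range fun n : ℕ => TA^[n] y)
        ⊆ Set.range fun n : ℕ => TA^[n] y := by
      rintro - ⟨-, ⟨n, rfl⟩, rfl⟩
      exact ⟨j + n, Function.iterate_add_apply TA j n y⟩
    exact closure_mono h11 (h10 ⟨QuotientAddGroup.mk x', hstepA, rfl⟩)
  -- assemble minimality
  have hMin : MinimalSubset TA (closure (Set.range fun n : ℕ => TA^[n] (QuotientAddGroup.mk x'))) := by
    rw [← hKorb]
    exact ⟨⟨QuotientAddGroup.mk x', hxK⟩, hK_closed, hK_maps, h_min⟩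
  refine ⟨hMin, ?_⟩
  -- MLS
  rw [← hKorb]
  intro ε hε
  classical
  set P : Finset (ℕ × ℕ) :=
    (Finset.range m ×ˢ Finset.range m).filter (fun p => xr p.1 - xr p.2 ∉ G) with hP
  set dd : ℕ × ℕ → ℝ := fun p => Metric.infDist (xr p.1 - xr p.2) G with hdd
  have hG_ne : G.Nonempty := ⟨0, h0G⟩
  have hdd_pos : ∀ p ∈ P, 0 < dd p := by
    intro p hp
    rw [hP, Finset.mem_filter] at hp
    rcases lt_or_eq_of_le (Metric.infDist_nonneg (s := G) (x := xr p.1 - xr p.2)) with h | h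
    · exact h
    · exfalso
      apply hp.2
      have : xr p.1 - xr p.2 ∈ closure G :=
        (Metric.mem_closure_iff_infDist_zero hG_ne).mpr h.symm
      rwa [hG, closure_closure] at this
  set δ : ℝ := min ε (if hPne : P.Nonempty then P.inf' hPne dd else 1) with hδdef
  have hδpos : 0 < δ := by
    rw [hδdef]
    apply lt_min hε
    split
    · rename_i hPne
      rw [Finset.lt_inf'_iff]
      exact hdd_pos
    · norm_num
  have hδε : δ ≤ ε := min_le_left _ _
  refine ⟨δ, hδpos, ?_⟩
  intro y hy z hz hyz
  obtain ⟨r, hrm, hyr⟩ := (hmemK y).mp hy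
  obtain ⟨t, htm, hzt⟩ := (hmemK z).mp hz
  have hyzG : y - z ∈ G := by
    by_cases hrt : xr r - xr t ∈ G
    · have hdec : y - z = (xr r - xr t) + ((y - xr r) - (z - xr t)) := by abel
      rw [hdec]
      exact hG_add _ _ hrt (hG_sub _ _ hyr hzt)
    · exfalso
      have hrtP : (r, t) ∈ P := by
        rw [hP, Finset.mem_filter, Finset.mem_product]
        exact ⟨⟨Finset.mem_range.mpr hrm, Finset.mem_range.mpr htm⟩, hrt⟩
      have hPne : P.Nonempty := ⟨(r, t), hrtP⟩
      have hδle : δ ≤ dd (r, t) := by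
        rw [hδdef]
        refine le_trans (min_le_right _ _) ?_
        rw [dif_pos hPne]
        exact Finset.inf'_le dd hrtP
      have hptG : (z - xr t) - (y - xr r) ∈ G := hG_sub _ _ hzt hyr
      have hge : dd (r, t) ≤ dist y z := by
        rw [hdd]
        simp only
        have hdec : dist y z = dist (xr r - xr t) ((z - xr t) - (y - xr r)) := by
          rw [dist_eq_norm, dist_eq_norm]
          congr 1
          abel
        rw [hdec]
        exact Metric.infDist_le_dist_of_mem hptG
      linarith
  have hempty : ∀ n : ℕ, n ∉ {n : ℕ | ε ≤ dist (TA^[n] y) (TA^[n] z)} := by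
    intro n hn
    rw [Set.mem_setOf_eq, h_distG n y z hyzG] at hn
    linarith
  rw [upperDensity_of_empty hempty]
  exact hε

end TorusPf


/-- If `A ∈ SL(2,ℤ)` (det `±1`) has all eigenvalues of modulus `1`,
then the automorphism flow `(𝕋², T_A)` is MMA and MMLS. -/
theorem torus_automorphism_MMA_MMLS
    (A : Matrix (Fin 2) (Fin 2) ℤ) (hdet : A.det = 1 ∨ A.det = -1)
    (heig : EigenvaluesModulusOne A)
    (TA : Torus2 → Torus2) (hTAcont : Continuous TA)
    (hTA : ∀ v : EuclideanSpace ℝ (Fin 2),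
      TA (QuotientAddGroup.mk v) = QuotientAddGroup.mk (matAction A v)) :
    IsMMA TA ∧ IsMMLS TA := by
  obtain ⟨m, e, N, hm, he, hem, hAm, hN2, hAN, hNA⟩ := TorusPf.struct A hdet heig
  constructor
  · -- MMA
    intro x
    refine ⟨closure (Set.range fun n : ℕ => TA^[n] x),
      (TorusPf.key A m e N hm he hem hAm hN2 hAN hNA TA hTAcont hTA x).1, ?_⟩
    intro ε hε
    refine ⟨x, subset_closure ⟨0, by simp⟩, ?_⟩
    have hzero : (fun N' : ℕ => (N' : ℝ)⁻¹ * ∑ n ∈ Finset.Icc 1 N', dist (TA^[n] x) (TA^[n] x))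
        = fun _ : ℕ => (0:ℝ) := by
      funext N'
      simp [dist_self]
    rw [hzero, Filter.limsup_const]
    exact hε
  · -- MMLS
    intro K hKmin
    obtain ⟨⟨x, hxK⟩, hKcl, hKmaps, hKdense⟩ := hKmin
    have hKeq : K = closure (Set.range fun n : ℕ => TA^[n] x) := by
      apply Set.Subset.antisymm
      · exact hKdense x hxK
      · refine closure_minimal ?_ hKcl
        rintro - ⟨n, rfl⟩
        exact hKmaps.iterate n hxK
    rw [hKeq]
    exact (TorusPf.key A m e N hm he hem hAm hN2 hAN hNA TA hTAcont hTA x).2
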